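/- Let S be a 1-dimensional Gorenstein Noetherian ring. Then for every finitely generated reflexive S-module M, one has Ext¹_S(M, S) = 0. -/

import Mathlib

open CategoryTheory

/-- `S` has injective dimension `≤ 1` as a module over itself: there is an
exact sequence `0 → S → I₀ → I₁ → 0` with `I₀`, `I₁` injective `S`-modules.
For a Noetherian ring of Krull dimension `1` this is the Gorenstein
condition. -/
def IsGorensteinOfDimOne (S : Type) [CommRing S] : Prop :=
  ∃ (I₀ I₁ : ModuleCat S) (f : ModuleCat.of S S ⟶ I₀) (g : I₀ ⟶ I₁),
    Injective I₀ ∧ Injective I₁ ∧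
    Function.Injective f ∧ Function.Surjective g ∧
    LinearMap.range f.hom = LinearMap.ker g.hom

namespace ExtVanishingAux

open HomologicalComplex Limits CategoryTheory.Abelian

variable {S : Type} [CommRing S]

/-- A chain map from a single complex (in degree 0) with projective value to a
complex that is exact at 0 is null-homotopic. -/
noncomputable def nullHomotopyFromSingle {X : ModuleCat S} (hX : Projective X)
    {Z : CochainComplex (ModuleCat S) ℤ} (hZ : Z.ExactAt 0)
    (u : (HomologicalComplex.single (ModuleCat S) (ComplexShape.up ℤ) 0).obj X ⟶ Z) :
    Homotopy u 0 := by
  have hexact : (Z.sc' (-1) 0 1).Exact :=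
    (Z.exactAt_iff' (-1) 0 1 (by simp) (by simp)).1 hZ
  rw [ShortComplex.moduleCat_exact_iff] at hexact
  have hexact' : ∀ x : Z.X 0, Z.d 0 1 x = 0 → ∃ y, Z.d (-1) 0 y = x := hexact
  have hu0 : u.f 0 ≫ Z.d 0 1 = 0 := by
    rw [u.comm 0 1, HomologicalComplex.single_obj_d, zero_comp]
  have hmem : ∀ a, u.f 0 a ∈ LinearMap.range (Z.d (-1) 0).hom := by
    intro a
    obtain ⟨y, hy⟩ := hexact' (u.f 0 a) (ConcreteCategory.congr_hom hu0 a)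
    exact ⟨y, hy⟩
  let T : ModuleCat S := ModuleCat.of S (LinearMap.range (Z.d (-1) 0).hom)
  let e : Z.X (-1) ⟶ T := ModuleCat.ofHom (Z.d (-1) 0).hom.rangeRestrict
  haveI : Epi e := (ModuleCat.epi_iff_surjective _).2 (LinearMap.surjective_rangeRestrict _)
  let v : ((HomologicalComplex.single (ModuleCat S) (ComplexShape.up ℤ) 0).obj X).X 0 ⟶ T :=
    ModuleCat.ofHom (LinearMap.codRestrict _ (u.f 0).hom hmem)
  haveI : Projective (((HomologicalComplex.single (ModuleCat S)
      (ComplexShape.up ℤ) 0).obj X).X 0) :=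
    Projective.of_iso (HomologicalComplex.singleObjXSelf (ComplexShape.up ℤ) 0 X).symm hX
  let ℓ := Projective.factorThru v e
  have key : ℓ ≫ Z.d (-1) 0 = u.f 0 := by
    have h1 : ℓ ≫ e = v := Projective.factorThru_comp v e
    ext a
    exact congrArg Subtype.val (ConcreteCategory.congr_hom h1 a)
  refine ⟨fun i j => if h : i = 0 ∧ j = -1 then
      (eqToHom (by rw [h.1]) :
        ((HomologicalComplex.single (ModuleCat S) (ComplexShape.up ℤ) 0).obj X).X i ⟶ _) ≫ ℓ ≫
        (eqToHom (by rw [h.2]) : Z.X (-1) ⟶ Z.X j) else 0, ?_, ?_⟩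
  · intro i j hij
    try dsimp only
    rw [dif_neg]
    rintro ⟨rfl, rfl⟩
    exact hij (by simp)
  · intro i
    by_cases hi : i = 0
    · subst hi
      rw [dNext_eq _ (show (ComplexShape.up ℤ).Rel 0 1 by simp),
        prevD_eq _ (show (ComplexShape.up ℤ).Rel (-1) 0 by simp),
        HomologicalComplex.single_obj_d, zero_comp]
      try dsimp only
      rw [dif_pos ⟨rfl, rfl⟩]
      simp [key]
    · exact (HomologicalComplex.isZero_single_obj_X
        (ComplexShape.up ℤ) 0 X i hi).eq_of_src _ _

/-- A chain map to a single complex (in degree k) with injective value from a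
complex that is exact at k is null-homotopic. -/
noncomputable def nullHomotopyToSingle {I : ModuleCat S} (hI : Injective I) (k : ℤ)
    {Z : CochainComplex (ModuleCat S) ℤ} (hZ : Z.ExactAt k)
    (u : Z ⟶ (HomologicalComplex.single (ModuleCat S) (ComplexShape.up ℤ) k).obj I) :
    Homotopy u 0 := by
  have hexact : (Z.sc' (k - 1) k (k + 1)).Exact :=
    (Z.exactAt_iff' (k - 1) k (k + 1) (by simp) (by simp)).1 hZ
  rw [ShortComplex.moduleCat_exact_iff] at hexact
  have hexact' : ∀ x : Z.X k, Z.d k (k + 1) x = 0 → ∃ y, Z.d (k - 1) k y = x := hexact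
  let v : Z.X k ⟶ I :=
    u.f k ≫ (HomologicalComplex.singleObjXSelf (ComplexShape.up ℤ) k I).hom
  have hv : Z.d (k - 1) k ≫ v = 0 := by
    have hc := u.comm (k - 1) k
    rw [HomologicalComplex.single_obj_d, comp_zero] at hc
    show Z.d (k - 1) k ≫ u.f k ≫ _ = 0
    rw [← Category.assoc, ← hc, zero_comp]
  let d : Z.X k ⟶ Z.X (k + 1) := Z.d k (k + 1)
  have hker : LinearMap.ker d.hom ≤ LinearMap.ker v.hom := by
    intro x hx
    obtain ⟨y, hy⟩ := hexact' x hx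
    have hvx : v x = v (Z.d (k - 1) k y) := by rw [hy]
    rw [LinearMap.mem_ker, hvx]
    exact ConcreteCategory.congr_hom hv y
  let q : (Z.X k ⧸ LinearMap.ker d.hom) →ₗ[S] I := (LinearMap.ker d.hom).liftQ v.hom hker
  let eq1 : (Z.X k ⧸ LinearMap.ker d.hom) ≃ₗ[S] LinearMap.range d.hom := d.hom.quotKerEquivRange
  let ψ : ModuleCat.of S (LinearMap.range d.hom) ⟶ I := ModuleCat.ofHom (q.comp eq1.symm.toLinearMap)
  let ι : ModuleCat.of S (LinearMap.range d.hom) ⟶ Z.X (k + 1) := ModuleCat.ofHom (LinearMap.range d.hom).subtype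
  haveI : Mono ι := (ModuleCat.mono_iff_injective _).2 (Submodule.injective_subtype _)
  haveI : Injective (I : ModuleCat S) := hI
  let h : Z.X (k + 1) ⟶ I := Injective.factorThru ψ ι
  have hcomp : ι ≫ h = ψ := Injective.comp_factorThru ψ ι
  have key : d ≫ h = v := by
    ext x
    have h1 : (⟨d x, LinearMap.mem_range_self d.hom x⟩ : LinearMap.range d.hom) =
        eq1 (Submodule.Quotient.mk x) := by
      apply Subtype.ext
      simp [eq1, LinearMap.quotKerEquivRange]
    have h2 : h (d x) = ψ (⟨d x, LinearMap.mem_range_self d.hom x⟩ : LinearMap.range d.hom) :=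
      ConcreteCategory.congr_hom hcomp (⟨d x, LinearMap.mem_range_self d.hom x⟩ : LinearMap.range d.hom)
    show h (d x) = v x
    rw [h2]
    show q (eq1.symm ⟨d x, LinearMap.mem_range_self d.hom x⟩) = v x
    rw [h1, LinearEquiv.symm_apply_apply]
    exact Submodule.liftQ_apply _ v.hom x
  refine ⟨fun i j => if hij : i = k + 1 ∧ j = k then
      (eqToHom (by rw [hij.1]) : Z.X i ⟶ Z.X (k + 1)) ≫ h ≫
        (HomologicalComplex.singleObjXSelf (ComplexShape.up ℤ) k I).inv ≫
        (eqToHom (by rw [hij.2]) :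
          ((HomologicalComplex.single (ModuleCat S) (ComplexShape.up ℤ) k).obj I).X k ⟶ _)
      else 0, ?_, ?_⟩
  · intro i j hij
    try dsimp only
    rw [dif_neg]
    rintro ⟨rfl, rfl⟩
    exact hij (by simp)
  · intro i
    by_cases hi : i = k
    · subst hi
      rw [dNext_eq _ (show (ComplexShape.up ℤ).Rel i (i + 1) by simp),
        prevD_eq _ (show (ComplexShape.up ℤ).Rel (i - 1) i by simp),
        HomologicalComplex.single_obj_d, comp_zero]
      try dsimp only
      rw [dif_pos ⟨rfl, rfl⟩]
      simp only [eqToHom_refl, Category.comp_id, Category.id_comp, zero_comp, add_zero,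
        HomologicalComplex.zero_f, zero_add]
      rw [← Category.assoc, key]
      show u.f i = (u.f i ≫ _) ≫ _
      rw [Category.assoc, Iso.hom_inv_id, Category.comp_id]
    · exact (HomologicalComplex.isZero_single_obj_X
        (ComplexShape.up ℤ) k I i hi).eq_of_tgt _ _

open DerivedCategory in
lemma subsingleton_ext_of_projective [HasExt.{0} (ModuleCat S)]
    (X Y : ModuleCat S) (hX : Projective X) (n : ℕ) (hn : n ≠ 0) :
    Subsingleton (Ext X Y n) := by
  letI := HasDerivedCategory.standard (ModuleCat S)
  suffices h : Subsingleton (ShiftedHom ((singleFunctor (ModuleCat S) 0).obj X)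
      ((singleFunctor (ModuleCat S) 0).obj Y) (n : ℤ)) from
    Equiv.subsingleton (Ext.homEquiv)
  let E : ((singleFunctor (ModuleCat S) 0).obj Y)⟦(n : ℤ)⟧ ≅
      (singleFunctor (ModuleCat S) (-(n : ℤ))).obj Y :=
    ((singleFunctors (ModuleCat S)).shiftIso (n : ℤ) (-(n : ℤ)) 0 (by omega)).app Y
  have key : ∀ (φ : (singleFunctor (ModuleCat S) 0).obj X ⟶
      (singleFunctor (ModuleCat S) (-(n : ℤ))).obj Y), φ = 0 := by
    intro φ
    let Ac := (HomologicalComplex.single (ModuleCat S) (ComplexShape.up ℤ) 0).obj X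
    let Bc := (HomologicalComplex.single (ModuleCat S) (ComplexShape.up ℤ) (-(n : ℤ))).obj Y
    let W := (HomotopyCategory.subcategoryAcyclic (ModuleCat S)).trW
    obtain ⟨ζ, hζ⟩ := Localization.exists_leftFraction Qh W
      (show Qh.obj ((HomotopyCategory.quotient _ _).obj Ac) ⟶
        Qh.obj ((HomotopyCategory.quotient _ _).obj Bc) from φ)
    have hqis : HomotopyCategory.quasiIso (ModuleCat S) (ComplexShape.up ℤ) ζ.s := by
      rw [HomotopyCategory.quasiIso_eq_subcategoryAcyclic_W]; exact ζ.hs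
    haveI : IsIso ((HomotopyCategory.homologyFunctor (ModuleCat S)
      (ComplexShape.up ℤ) 0).map ζ.s) := hqis 0
    have hzB : IsZero ((HomotopyCategory.homologyFunctor (ModuleCat S)
        (ComplexShape.up ℤ) 0).obj ((HomotopyCategory.quotient _ _).obj Bc)) := by
      refine IsZero.of_iso ?_ ((HomotopyCategory.homologyFunctorFactors
        (ModuleCat S) (ComplexShape.up ℤ) 0).app Bc)
      exact HomologicalComplex.isZero_single_obj_homology _ _ _ _
        (by simp; omega)
    have hzL : IsZero ((HomotopyCategory.homologyFunctor (ModuleCat S)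
        (ComplexShape.up ℤ) 0).obj ζ.Y') :=
      IsZero.of_iso hzB (asIso ((HomotopyCategory.homologyFunctor (ModuleCat S)
        (ComplexShape.up ℤ) 0).map ζ.s)).symm
    have hex : ζ.Y'.as.ExactAt 0 := by
      rw [HomologicalComplex.exactAt_iff_isZero_homology]
      exact IsZero.of_iso hzL ((HomotopyCategory.homologyFunctorFactors
        (ModuleCat S) (ComplexShape.up ℤ) 0).app ζ.Y'.as).symm
    obtain ⟨u, hu⟩ := (HomotopyCategory.quotient (ModuleCat S)
      (ComplexShape.up ℤ)).map_surjective
      (show (HomotopyCategory.quotient _ _).obj Ac ⟶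
        (HomotopyCategory.quotient _ _).obj ζ.Y'.as from ζ.f)
    have hf0 : ζ.f = 0 := by
      have heq : ζ.f = (HomotopyCategory.quotient (ModuleCat S) (ComplexShape.up ℤ)).map u :=
        hu.symm
      rw [heq, HomotopyCategory.eq_of_homotopy u 0 (nullHomotopyFromSingle hX hex u),
        Functor.map_zero]
      rfl
    have h2 := ζ.map_comp_map_s Qh (Localization.inverts Qh W)
    rw [hf0, Functor.map_zero] at h2
    haveI : IsIso (Qh.map ζ.s) := Localization.inverts Qh W _ ζ.hs
    have h3 : ζ.map Qh (Localization.inverts Qh W) = 0 := by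
      rw [← cancel_mono (Qh.map ζ.s), h2, zero_comp]
    exact hζ.trans h3
  refine ⟨fun f g => ?_⟩
  have hf := key ((f : (singleFunctor (ModuleCat S) 0).obj X ⟶
    ((singleFunctor (ModuleCat S) 0).obj Y)⟦(n : ℤ)⟧) ≫ E.hom)
  have hg := key ((g : (singleFunctor (ModuleCat S) 0).obj X ⟶
    ((singleFunctor (ModuleCat S) 0).obj Y)⟦(n : ℤ)⟧) ≫ E.hom)
  have : (f : (singleFunctor (ModuleCat S) 0).obj X ⟶
      ((singleFunctor (ModuleCat S) 0).obj Y)⟦(n : ℤ)⟧) ≫ E.hom =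
      (g : (singleFunctor (ModuleCat S) 0).obj X ⟶
      ((singleFunctor (ModuleCat S) 0).obj Y)⟦(n : ℤ)⟧) ≫ E.hom := by
    rw [hf, hg]
  exact (cancel_mono E.hom).1 this

open DerivedCategory in
lemma subsingleton_ext_of_injective [HasExt.{0} (ModuleCat S)]
    (X Y : ModuleCat S) (hY : Injective Y) (n : ℕ) (hn : n ≠ 0) :
    Subsingleton (Ext X Y n) := by
  letI := HasDerivedCategory.standard (ModuleCat S)
  suffices h : Subsingleton (ShiftedHom ((singleFunctor (ModuleCat S) 0).obj X)
      ((singleFunctor (ModuleCat S) 0).obj Y) (n : ℤ)) from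
    Equiv.subsingleton (Ext.homEquiv)
  let E : ((singleFunctor (ModuleCat S) 0).obj Y)⟦(n : ℤ)⟧ ≅
      (singleFunctor (ModuleCat S) (-(n : ℤ))).obj Y :=
    ((singleFunctors (ModuleCat S)).shiftIso (n : ℤ) (-(n : ℤ)) 0 (by omega)).app Y
  have key : ∀ (φ : (singleFunctor (ModuleCat S) 0).obj X ⟶
      (singleFunctor (ModuleCat S) (-(n : ℤ))).obj Y), φ = 0 := by
    intro φ
    let Ac := (HomologicalComplex.single (ModuleCat S) (ComplexShape.up ℤ) 0).obj X
    let Bc := (HomologicalComplex.single (ModuleCat S) (ComplexShape.up ℤ) (-(n : ℤ))).obj Y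
    let W := (HomotopyCategory.subcategoryAcyclic (ModuleCat S)).trW
    obtain ⟨ζ, hζ⟩ := Localization.exists_rightFraction Qh W
      (show Qh.obj ((HomotopyCategory.quotient _ _).obj Ac) ⟶
        Qh.obj ((HomotopyCategory.quotient _ _).obj Bc) from φ)
    have hqis : HomotopyCategory.quasiIso (ModuleCat S) (ComplexShape.up ℤ) ζ.s := by
      rw [HomotopyCategory.quasiIso_eq_subcategoryAcyclic_W]; exact ζ.hs
    haveI : IsIso ((HomotopyCategory.homologyFunctor (ModuleCat S)
      (ComplexShape.up ℤ) (-(n : ℤ))).map ζ.s) := hqis (-(n : ℤ))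
    have hzA : IsZero ((HomotopyCategory.homologyFunctor (ModuleCat S)
        (ComplexShape.up ℤ) (-(n : ℤ))).obj ((HomotopyCategory.quotient _ _).obj Ac)) := by
      refine IsZero.of_iso ?_ ((HomotopyCategory.homologyFunctorFactors
        (ModuleCat S) (ComplexShape.up ℤ) (-(n : ℤ))).app Ac)
      exact HomologicalComplex.isZero_single_obj_homology _ _ _ _
        (by simp; omega)
    have hzL : IsZero ((HomotopyCategory.homologyFunctor (ModuleCat S)
        (ComplexShape.up ℤ) (-(n : ℤ))).obj ζ.X') :=
      IsZero.of_iso hzA (asIso ((HomotopyCategory.homologyFunctor (ModuleCat S)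
        (ComplexShape.up ℤ) (-(n : ℤ))).map ζ.s))
    have hex : ζ.X'.as.ExactAt (-(n : ℤ)) := by
      rw [HomologicalComplex.exactAt_iff_isZero_homology]
      exact IsZero.of_iso hzL ((HomotopyCategory.homologyFunctorFactors
        (ModuleCat S) (ComplexShape.up ℤ) (-(n : ℤ))).app ζ.X'.as).symm
    obtain ⟨u, hu⟩ := (HomotopyCategory.quotient (ModuleCat S)
      (ComplexShape.up ℤ)).map_surjective
      (show (HomotopyCategory.quotient _ _).obj ζ.X'.as ⟶
        (HomotopyCategory.quotient _ _).obj Bc from ζ.f)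
    have hf0 : ζ.f = 0 := by
      have heq : ζ.f = (HomotopyCategory.quotient (ModuleCat S) (ComplexShape.up ℤ)).map u :=
        hu.symm
      rw [heq, HomotopyCategory.eq_of_homotopy u 0 (nullHomotopyToSingle hY (-(n : ℤ)) hex u),
        Functor.map_zero]
      rfl
    have h2 := ζ.map_s_comp_map Qh (Localization.inverts Qh W)
    rw [hf0, Functor.map_zero] at h2
    haveI : IsIso (Qh.map ζ.s) := Localization.inverts Qh W _ ζ.hs
    have h3 : ζ.map Qh (Localization.inverts Qh W) = 0 := by
      rw [← cancel_epi (Qh.map ζ.s), h2, comp_zero]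
    exact hζ.trans h3
  refine ⟨fun f g => ?_⟩
  have hf := key ((f : (singleFunctor (ModuleCat S) 0).obj X ⟶
    ((singleFunctor (ModuleCat S) 0).obj Y)⟦(n : ℤ)⟧) ≫ E.hom)
  have hg := key ((g : (singleFunctor (ModuleCat S) 0).obj X ⟶
    ((singleFunctor (ModuleCat S) 0).obj Y)⟦(n : ℤ)⟧) ≫ E.hom)
  have : (f : (singleFunctor (ModuleCat S) 0).obj X ⟶
      ((singleFunctor (ModuleCat S) 0).obj Y)⟦(n : ℤ)⟧) ≫ E.hom =
      (g : (singleFunctor (ModuleCat S) 0).obj X ⟶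
      ((singleFunctor (ModuleCat S) 0).obj Y)⟦(n : ℤ)⟧) ≫ E.hom := by
    rw [hf, hg]
  exact (cancel_mono E.hom).1 this

end ExtVanishingAux

/-- Over a `1`-dimensional Gorenstein Noetherian ring `S`,
every finitely generated reflexive `S`-module `M` satisfies
`Ext¹_S(M, S) = 0`. -/
theorem ext_one_vanishes_of_reflexive
    (S : Type) [CommRing S] [IsNoetherianRing S]
    [HasExt.{0} (ModuleCat S)]
    (hdim : ringKrullDim S = 1) (hGor : IsGorensteinOfDimOne S)
    (M : Type) [AddCommGroup M] [Module S M] [Module.Finite S M]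
    (hrefl : Function.Bijective (Module.Dual.eval S M)) :
    Subsingleton (Abelian.Ext.{0} (ModuleCat.of S M) (ModuleCat.of S S) 1) := by
  classical
  open ExtVanishingAux Abelian in
  -- Step 1: Ext²(Z, S) = 0 for every Z, from the Gorenstein short exact sequence.
  obtain ⟨I₀, I₁, f, g, hI₀, hI₁, hfinj, hgsurj, hfg⟩ := hGor
  have hT : (ShortComplex.mk f g (by
      refine ModuleCat.hom_ext (LinearMap.ext fun x => ?_)
      have : f x ∈ LinearMap.ker g.hom := hfg ▸ LinearMap.mem_range_self f.hom x
      exact this)).ShortExact := by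
    refine ShortComplex.ShortExact.mk' ?_ ?_ ?_
    · rw [ShortComplex.moduleCat_exact_iff]
      intro x hx
      have hx' : x ∈ LinearMap.ker g.hom := hx
      exact hfg.symm.le hx'
    · exact (ModuleCat.mono_iff_injective _).2 hfinj
    · exact (ModuleCat.epi_iff_surjective _).2 hgsurj
  have ext2vanish : ∀ (Z : ModuleCat S) (x : Ext Z (ModuleCat.of S S) 2), x = 0 := by
    intro Z x
    have hxf : x.comp (Ext.mk₀ f) (add_zero 2) = 0 :=
      haveI := subsingleton_ext_of_injective Z I₀ hI₀ 2 (by omega)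
      Subsingleton.elim _ _
    obtain ⟨x₃, hx₃⟩ := Abelian.Ext.covariant_sequence_exact₁ Z hT x hxf (n₀ := 1) rfl
    haveI := subsingleton_ext_of_injective Z I₁ hI₁ 1 (by omega)
    rw [← hx₃, Subsingleton.elim x₃ 0, Ext.zero_comp]
  -- Step 2: embed M into a finite free module, using reflexivity.
  -- The dual of M is a finitely generated module.
  obtain ⟨k, p, hp⟩ := Module.Finite.exists_fin' S M
  have hpd : Function.Injective p.dualMap := by
    intro φ ψ h
    ext m
    obtain ⟨x, rfl⟩ := hp m
    exact DFunLike.congr_fun h x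
  haveI : Module.Finite S (Module.Dual S M) :=
    Module.Finite.of_injective p.dualMap hpd
  obtain ⟨m, π, hπ⟩ := Module.Finite.exists_fin' S (Module.Dual S M)
  have hπd : Function.Injective π.dualMap := by
    intro φ ψ h
    ext v
    obtain ⟨x, rfl⟩ := hπ v
    exact DFunLike.congr_fun h x
  let F := ModuleCat.of S (Module.Dual S (Fin m → S))
  let ι : M →ₗ[S] Module.Dual S (Fin m → S) := π.dualMap.comp (Module.Dual.eval S M)
  have hιinj : Function.Injective ι := hπd.comp hrefl.injective
  haveI : Module.Free S (Module.Dual S (Fin m → S)) := Module.Free.linearMap _ _ _ _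
  have hFproj : Projective F :=
    ModuleCat.projective_of_free (Module.Free.chooseBasis S (Module.Dual S (Fin m → S)))
  -- the short exact sequence 0 → M → F → F/M → 0
  let ιc : ModuleCat.of S M ⟶ F := ModuleCat.ofHom ι
  let gc : F ⟶ ModuleCat.of S ((Module.Dual S (Fin m → S)) ⧸ LinearMap.range ι) :=
    ModuleCat.ofHom (LinearMap.range ι).mkQ
  have hS2 : (ShortComplex.mk ιc gc (by
      ext x
      show (LinearMap.range ι).mkQ (ι x) = 0
      rw [Submodule.mkQ_apply, Submodule.Quotient.mk_eq_zero]
      exact LinearMap.mem_range_self ι x)).ShortExact := by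
    refine ShortComplex.ShortExact.mk' ?_ ?_ ?_
    · rw [ShortComplex.moduleCat_exact_iff]
      intro x hx
      have : x ∈ LinearMap.range ι := by
        rwa [← Submodule.Quotient.mk_eq_zero, ← Submodule.mkQ_apply]
      exact this
    · exact (ModuleCat.mono_iff_injective _).2 hιinj
    · exact (ModuleCat.epi_iff_surjective _).2 (Submodule.mkQ_surjective _)
  -- Step 3: conclude using the contravariant long exact sequence.
  have hall : ∀ x : Ext (ModuleCat.of S M) (ModuleCat.of S S) 1, x = 0 := by
    intro x
    have hδ : hS2.extClass.comp x rfl = 0 := ext2vanish _ _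
    obtain ⟨x₂, hx₂⟩ := Abelian.Ext.contravariant_sequence_exact₁ hS2 (ModuleCat.of S S) x rfl hδ
    haveI := subsingleton_ext_of_projective F (ModuleCat.of S S) hFproj 1 (by omega)
    rw [← hx₂, Subsingleton.elim x₂ 0, Ext.comp_zero]
  exact ⟨fun a b => (hall a).trans (hall b).symm⟩
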